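/- Let μ be a probability measure on a metric space and f a bounded measurable function with Z(s) = log ∫ e^{sf} dμ. If λ(∫ e^{2sf}dμ - (∫ e^{sf}dμ)²) ≤ s² ∫ e^{2sf} dμ for all 0 ≤ s ≤ √λ, then ∫ e^{s(f - ∫f dμ)} dμ ≤ exp( (s/√λ) ∫₀^{s/√λ} (-log(1 - v²))/v² dv ) for all 0 < s < √λ. -/

import Mathlib

open MeasureTheory Finset

namespace HerbstAux

noncomputable def φ : ℝ → ℝ := fun v => (-Real.log (1 - v ^ 2)) / v ^ 2

lemma g_nonneg {v : ℝ} (h1 : v ^ 2 < 1) : 0 ≤ -Real.log (1 - v ^ 2) := by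
  have : Real.log (1 - v ^ 2) ≤ 0 := Real.log_nonpos (by nlinarith [sq_nonneg v]) (by nlinarith)
  linarith

lemma g_mono' {a b : ℝ} (ha : 0 ≤ a) (hab : a ≤ b) (hb : b < 1) :
    -Real.log (1 - a ^ 2) ≤ -Real.log (1 - b ^ 2) := by
  have h1 : Real.log (1 - b ^ 2) ≤ Real.log (1 - a ^ 2) :=
    Real.log_le_log (by nlinarith) (by nlinarith)
  linarith

lemma φ_nonneg {v : ℝ} (h0 : 0 ≤ v) (h1 : v < 1) : 0 ≤ φ v := by
  have := g_nonneg (v := v) (by nlinarith)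
  exact div_nonneg this (sq_nonneg v)

lemma φ_le {v τ : ℝ} (h0 : 0 < v) (hvt : v ≤ τ) (ht : τ < 1) : φ v ≤ (1 - τ ^ 2)⁻¹ := by
  have hτ0 : 0 < τ := lt_of_lt_of_le h0 hvt
  have hv1 : 0 < 1 - v ^ 2 := by nlinarith
  have hτ1 : 0 < 1 - τ ^ 2 := by nlinarith
  have hlog : -Real.log (1 - v ^ 2) ≤ v ^ 2 / (1 - v ^ 2) := by
    have h2 : Real.log ((1 - v ^ 2)⁻¹) ≤ (1 - v ^ 2)⁻¹ - 1 :=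
      Real.log_le_sub_one_of_pos (by positivity)
    rw [Real.log_inv] at h2
    have h3 : (1 - v ^ 2)⁻¹ - 1 = v ^ 2 / (1 - v ^ 2) := by field_simp; ring
    linarith [h3 ▸ h2]
  have h4 : φ v ≤ (v ^ 2 / (1 - v ^ 2)) / v ^ 2 := by
    unfold φ; gcongr
  have h5 : (v ^ 2 / (1 - v ^ 2)) / v ^ 2 = (1 - v ^ 2)⁻¹ := by
    field_simp
  rw [h5] at h4
  refine h4.trans ?_
  gcongr <;> nlinarith

lemma φ_measurable : Measurable φ := by
  unfold φ
  exact ((Real.measurable_log.comp (by measurability)).neg).div (by measurability)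

lemma φ_contOn {a b : ℝ} (ha : 0 < a) (hab : a ≤ b) (hb : b < 1) :
    ContinuousOn φ (Set.uIcc a b) := by
  rw [Set.uIcc_of_le hab]
  have hcont : ∀ v ∈ Set.Icc a b, v ≠ 0 ∧ 1 - v ^ 2 ≠ 0 := by
    intro v hv
    have hv0 : 0 < v := lt_of_lt_of_le ha hv.1
    have hv1 : v < 1 := lt_of_le_of_lt hv.2 hb
    exact ⟨ne_of_gt hv0, by nlinarith⟩
  unfold φ
  apply ContinuousOn.div
  · exact (((continuous_const.sub (continuous_pow 2)).continuousOn).log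
      (fun v hv => (hcont v hv).2)).neg
  · exact (continuous_pow 2).continuousOn
  · intro v hv
    exact pow_ne_zero 2 (hcont v hv).1

lemma integral_inv_sq {a b : ℝ} (ha : 0 < a) (hab : a ≤ b) :
    ∫ v in a..b, (v ^ 2)⁻¹ = a⁻¹ - b⁻¹ := by
  have hd : ∀ v ∈ Set.uIcc a b, HasDerivAt (fun y : ℝ => -y⁻¹) ((v ^ 2)⁻¹) v := by
    intro v hv
    rw [Set.uIcc_of_le hab] at hv
    have hv0 : v ≠ 0 := ne_of_gt (lt_of_lt_of_le ha hv.1)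
    simpa [Pi.neg_def] using (hasDerivAt_inv hv0).neg
  have hi : IntervalIntegrable (fun v : ℝ => (v ^ 2)⁻¹) volume a b := by
    apply ContinuousOn.intervalIntegrable
    rw [Set.uIcc_of_le hab]
    exact ContinuousOn.inv₀ (continuous_pow 2).continuousOn
      (fun v hv => pow_ne_zero 2 (ne_of_gt (lt_of_lt_of_le ha hv.1)))
  have := intervalIntegral.integral_eq_sub_of_hasDerivAt hd hi
  rw [this]; ring

lemma φ_intIntegrable {τ : ℝ} (h0 : 0 ≤ τ) (h1 : τ < 1) :
    IntervalIntegrable φ volume 0 τ := by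
  rw [intervalIntegrable_iff_integrableOn_Ioc_of_le h0]
  apply Integrable.mono' (integrable_const ((1 - τ ^ 2)⁻¹))
  · exact φ_measurable.aestronglyMeasurable
  · filter_upwards [ae_restrict_mem measurableSet_Ioc] with v hv
    rw [Real.norm_eq_abs, abs_of_nonneg (φ_nonneg hv.1.le (lt_of_le_of_lt hv.2 h1))]
    exact φ_le hv.1 hv.2 h1

lemma step_integral {t : ℝ} (ht0 : 0 < t) (ht1 : t < 1) (k : ℕ) :
    (2:ℝ) ^ k * (-Real.log (1 - (t / 2 ^ (k + 1)) ^ 2)) ≤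
      t * ∫ v in (t / 2 ^ (k + 1))..(t / 2 ^ k), φ v := by
  set a := t / 2 ^ (k + 1) with ha_def
  set b := t / 2 ^ k with hb_def
  have ha : 0 < a := by positivity
  have hab : a ≤ b := by
    rw [ha_def, hb_def]
    gcongr <;> first | exact ht0.le | norm_num | omega
  have hbt : b ≤ t := by
    rw [hb_def]
    apply div_le_self ht0.le
    exact one_le_pow₀ (by norm_num)
  have hb1 : b < 1 := lt_of_le_of_lt hbt ht1
  have hmono : ∀ v ∈ Set.Icc a b, (-Real.log (1 - a ^ 2)) * (v ^ 2)⁻¹ ≤ φ v := by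
    intro v hv
    have hv0 : 0 < v := lt_of_lt_of_le ha hv.1
    have hv1 : v < 1 := lt_of_le_of_lt hv.2 hb1
    have := g_mono' ha.le hv.1 hv1
    unfold φ
    rw [div_eq_mul_inv]
    gcongr
  have hint1 : IntervalIntegrable φ volume a b :=
    (φ_contOn ha hab hb1).intervalIntegrable
  have hint2 : IntervalIntegrable (fun v => (-Real.log (1 - a ^ 2)) * (v ^ 2)⁻¹) volume a b := by
    apply ContinuousOn.intervalIntegrable
    apply ContinuousOn.mul continuousOn_const
    rw [Set.uIcc_of_le hab]
    exact ContinuousOn.inv₀ (continuous_pow 2).continuousOn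
      (fun v hv => pow_ne_zero 2 (ne_of_gt (lt_of_lt_of_le ha hv.1)))
  have hle := intervalIntegral.integral_mono_on hab hint2 hint1 hmono
  have hcalc : ∫ v in a..b, (-Real.log (1 - a ^ 2)) * (v ^ 2)⁻¹ =
      (-Real.log (1 - a ^ 2)) * (a⁻¹ - b⁻¹) := by
    rw [intervalIntegral.integral_const_mul, integral_inv_sq ha hab]
  have hdiff : a⁻¹ - b⁻¹ = 2 ^ k / t := by
    rw [ha_def, hb_def]
    rw [pow_succ]
    field_simp
    ring
  rw [hcalc, hdiff] at hle
  have hg : 0 ≤ -Real.log (1 - a ^ 2) := g_nonneg (by nlinarith)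
  calc (2:ℝ) ^ k * (-Real.log (1 - a ^ 2))
      = t * ((-Real.log (1 - a ^ 2)) * (2 ^ k / t)) := by field_simp
    _ ≤ t * ∫ v in a..b, φ v := by gcongr

lemma telescope {t : ℝ} (ht0 : 0 < t) (ht1 : t < 1) (n : ℕ) :
    ∑ k ∈ Finset.range n, ∫ v in (t / 2 ^ (k + 1))..(t / 2 ^ k), φ v =
      ∫ v in (t / 2 ^ n)..t, φ v := by
  induction n with
  | zero => simp
  | succ n ih =>
    rw [Finset.sum_range_succ, ih]
    have h1 : IntervalIntegrable φ volume (t / 2 ^ (n + 1)) (t / 2 ^ n) := by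
      apply (φ_contOn (by positivity) ?_ ?_).intervalIntegrable
      · gcongr <;> first | exact ht0.le | norm_num | omega
      · calc t / 2 ^ n ≤ t := div_le_self ht0.le (one_le_pow₀ (by norm_num))
          _ < 1 := ht1
    have h2 : IntervalIntegrable φ volume (t / 2 ^ n) t := by
      apply (φ_contOn (by positivity) ?_ ht1).intervalIntegrable
      exact div_le_self ht0.le (one_le_pow₀ (by norm_num))
    rw [← intervalIntegral.integral_add_adjacent_intervals h1 h2]
    ring

lemma sum_le_integral {t : ℝ} (ht0 : 0 < t) (ht1 : t < 1) (n : ℕ) :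
    ∑ k ∈ Finset.range n, (2:ℝ) ^ k * (-Real.log (1 - (t / 2 ^ (k + 1)) ^ 2)) ≤
      t * ∫ v in (0:ℝ)..t, φ v := by
  have htn : 0 < t / 2 ^ n := by positivity
  have htn1 : t / 2 ^ n ≤ t := div_le_self ht0.le (one_le_pow₀ (by norm_num))
  have hi1 : IntervalIntegrable φ volume 0 (t / 2 ^ n) :=
    φ_intIntegrable htn.le (lt_of_le_of_lt htn1 ht1)
  have hi2 : IntervalIntegrable φ volume (t / 2 ^ n) t := by
    apply (φ_contOn htn htn1 ht1).intervalIntegrable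
  calc ∑ k ∈ Finset.range n, (2:ℝ) ^ k * (-Real.log (1 - (t / 2 ^ (k + 1)) ^ 2))
      ≤ ∑ k ∈ Finset.range n, t * ∫ v in (t / 2 ^ (k + 1))..(t / 2 ^ k), φ v :=
        Finset.sum_le_sum fun k _ => step_integral ht0 ht1 k
    _ = t * ∫ v in (t / 2 ^ n)..t, φ v := by
        rw [← Finset.mul_sum, telescope ht0 ht1 n]
    _ ≤ t * ∫ v in (0:ℝ)..t, φ v := by
        gcongr
        rw [← intervalIntegral.integral_add_adjacent_intervals hi1 hi2]
        have : 0 ≤ ∫ v in (0:ℝ)..(t / 2 ^ n), φ v := by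
          apply intervalIntegral.integral_nonneg htn.le
          intro v hv
          exact φ_nonneg hv.1 (lt_of_le_of_lt (hv.2.trans htn1) ht1)
        linarith

section MeasureSide

variable {X : Type*} [MeasurableSpace X] (μ : Measure X) [IsProbabilityMeasure μ]
  {f : X → ℝ} {C : ℝ}

lemma expInt (hf : Measurable f) (hb : ∀ x, |f x| ≤ C) (u : ℝ) :
    Integrable (fun x => Real.exp (u * f x)) μ := by
  apply (integrable_const (Real.exp (|u| * C))).mono'
  · exact ((hf.const_mul u).exp).aestronglyMeasurable
  · refine ae_of_all _ fun x => ?_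
    rw [Real.norm_eq_abs, Real.abs_exp]
    apply Real.exp_le_exp.2
    calc u * f x ≤ |u * f x| := le_abs_self _
      _ = |u| * |f x| := abs_mul u (f x)
      _ ≤ |u| * C := mul_le_mul_of_nonneg_left (hb x) (abs_nonneg u)

lemma fInt (hf : Measurable f) (hb : ∀ x, |f x| ≤ C) : Integrable f μ := by
  apply (integrable_const C).mono' hf.aestronglyMeasurable
  exact ae_of_all _ fun x => by rw [Real.norm_eq_abs]; exact hb x

lemma expPos (hf : Measurable f) (hb : ∀ x, |f x| ≤ C) (u : ℝ) :
    0 < ∫ x, Real.exp (u * f x) ∂μ := by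
  have h1 : ∫ x, Real.exp (-(|u| * C)) ∂μ ≤ ∫ x, Real.exp (u * f x) ∂μ := by
    apply integral_mono (integrable_const _) (expInt μ hf hb u)
    intro x
    apply Real.exp_le_exp.2
    calc -(|u| * C) ≤ -(|u| * |f x|) := by
          have := hb x
          nlinarith [abs_nonneg u]
      _ = -|u * f x| := by rw [abs_mul]
      _ ≤ u * f x := neg_abs_le _
  have h2 : ∫ _x, Real.exp (-(|u| * C)) ∂μ = Real.exp (-(|u| * C)) := by
    simp
  rw [h2] at h1
  exact lt_of_lt_of_le (Real.exp_pos _) h1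

lemma smallBound (hf : Measurable f) (hb : ∀ x, |f x| ≤ C) {u : ℝ}
    (hu0 : 0 ≤ u) (huC : u * C ≤ 1) :
    ∫ x, Real.exp (u * f x) ∂μ ≤ Real.exp (u * (∫ y, f y ∂μ) + u ^ 2 * C ^ 2) := by
  set m := ∫ y, f y ∂μ with hm
  have hpt : ∀ x, Real.exp (u * f x) ≤ 1 + u * f x + u ^ 2 * C ^ 2 := by
    intro x
    have habs : |u * f x| ≤ 1 := by
      rw [abs_mul, abs_of_nonneg hu0]
      calc u * |f x| ≤ u * C := mul_le_mul_of_nonneg_left (hb x) hu0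
        _ ≤ 1 := huC
    have hbound := Real.exp_bound habs (n := 2) (by norm_num)
    have hsum : ∑ m ∈ Finset.range 2, (u * f x) ^ m / (m.factorial : ℝ)
        = 1 + u * f x := by
      simp [Finset.sum_range_succ]
    rw [hsum] at hbound
    have h1 : Real.exp (u * f x) - (1 + u * f x) ≤ (u * f x) ^ 2 * (3 / (2 * 2)) := by
      have := abs_le.1 hbound
      have h2' := this.2
      rw [sub_le_iff_le_add] at h2' ⊢
      calc Real.exp (u * f x) ≤ |u * f x| ^ 2 * (↑(Nat.succ 2) / (↑(Nat.factorial 2) * 2)) + (1 + u * f x) := by linarith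
        _ = (u * f x) ^ 2 * (3 / (2 * 2)) + (1 + u * f x) := by
            rw [sq_abs]; norm_num [Nat.factorial]
    have h2 : (u * f x) ^ 2 = u ^ 2 * (f x) ^ 2 := mul_pow u (f x) 2
    have h3 : (f x) ^ 2 ≤ C ^ 2 := by
      have := hb x
      nlinarith [abs_nonneg (f x), sq_abs (f x)]
    nlinarith [sq_nonneg u]
  have hint : ∫ x, Real.exp (u * f x) ∂μ ≤ ∫ x, (1 + u * f x + u ^ 2 * C ^ 2) ∂μ := by
    apply integral_mono (expInt μ hf hb u) _ hpt
    exact ((integrable_const (1:ℝ)).add ((fInt μ hf hb).const_mul u)).add (integrable_const _)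
  have hval : ∫ x, (1 + u * f x + u ^ 2 * C ^ 2) ∂μ = 1 + u * m + u ^ 2 * C ^ 2 := by
    have hi1 : Integrable (fun x => u * f x) μ := (fInt μ hf hb).const_mul u
    have e1 := integral_add (μ := μ) (f := fun x => 1 + u * f x)
      (g := fun _ => u ^ 2 * C ^ 2) ((integrable_const (1:ℝ)).add hi1) (integrable_const _)
    have e2 := integral_add (μ := μ) (f := fun _ => (1:ℝ)) (g := fun x => u * f x)
      (integrable_const (1:ℝ)) hi1
    simp only [e1, e2, integral_const_mul, integral_const]
    simp [hm]
  rw [hval] at hint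
  calc ∫ x, Real.exp (u * f x) ∂μ ≤ 1 + u * m + u ^ 2 * C ^ 2 := hint
    _ = (u * m + u ^ 2 * C ^ 2) + 1 := by ring
    _ ≤ Real.exp (u * m + u ^ 2 * C ^ 2) := Real.add_one_le_exp _

end MeasureSide

end HerbstAux


open MeasureTheory

/-- core of the Herbst argument: if
`λ (∫ e^{2sf} - (∫ e^{sf})²) ≤ s² ∫ e^{2sf}` for all `0 ≤ s ≤ √λ`, then for all
`0 < s < √λ`,
`∫ e^{s(f - ∫ f)} dμ ≤ exp((s/√λ) ∫₀^{s/√λ} (-log(1 - v²))/v² dv)`. -/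
theorem herbst_mgf_bound {X : Type*} [MeasurableSpace X] (μ : Measure X)
    [IsProbabilityMeasure μ] (f : X → ℝ) (hf : Measurable f)
    (C : ℝ) (hb : ∀ x, |f x| ≤ C) (lam : ℝ) (hlam : 0 < lam)
    (H : ∀ s : ℝ, 0 ≤ s → s ≤ Real.sqrt lam →
      lam * ((∫ x, Real.exp (2 * s * f x) ∂μ) - (∫ x, Real.exp (s * f x) ∂μ) ^ 2) ≤
        s ^ 2 * ∫ x, Real.exp (2 * s * f x) ∂μ) :
    ∀ s : ℝ, 0 < s → s < Real.sqrt lam →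
      ∫ x, Real.exp (s * (f x - ∫ y, f y ∂μ)) ∂μ ≤
        Real.exp ((s / Real.sqrt lam) *
          ∫ v in (0:ℝ)..(s / Real.sqrt lam), (-Real.log (1 - v ^ 2)) / v ^ 2) := by
  intro s hs hsr
  have hrpos : 0 < Real.sqrt lam := Real.sqrt_pos.2 hlam
  set r := Real.sqrt lam with hr
  have hr2 : r ^ 2 = lam := Real.sq_sqrt hlam.le
  set m := ∫ y, f y ∂μ with hm
  set t := s / r with ht
  have ht0 : 0 < t := div_pos hs hrpos
  have ht1 : t < 1 := (div_lt_one hrpos).2 hsr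
  show _ ≤ Real.exp (t * ∫ v in (0:ℝ)..t, HerbstAux.φ v)
  set A : ℝ → ℝ := fun u => ∫ x, Real.exp (u * f x) ∂μ with hA
  have hApos : ∀ u, 0 < A u := fun u => HerbstAux.expPos μ hf hb u
  -- recursion step from the hypothesis
  have hrec : ∀ u : ℝ, 0 ≤ u → u < r →
      A (2 * u) ≤ A u ^ 2 * Real.exp (-Real.log (1 - (u / r) ^ 2)) := by
    intro u hu0 hur
    have hH : lam * (A (2 * u) - A u ^ 2) ≤ u ^ 2 * A (2 * u) := H u hu0 hur.le
    have hu2 : u ^ 2 < lam := by nlinarith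
    have hq : (u / r) ^ 2 = u ^ 2 / lam := by rw [div_pow, hr2]
    have hpos : 0 < 1 - (u / r) ^ 2 := by
      rw [hq, sub_pos]; exact (div_lt_one hlam).2 hu2
    rw [Real.exp_neg, Real.exp_log hpos, hq]
    have key2 : (lam - u ^ 2) * A (2 * u) ≤ lam * A u ^ 2 := by nlinarith
    have heq : A u ^ 2 * (1 - u ^ 2 / lam)⁻¹ = (lam * A u ^ 2) / (lam - u ^ 2) := by
      have h1 : lam - u ^ 2 ≠ 0 := by nlinarith
      have h2 : 1 - u ^ 2 / lam ≠ 0 := by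
        intro hc
        apply h1
        field_simp at hc
        linarith
      field_simp
    rw [heq, le_div_iff₀ (by nlinarith)]
    nlinarith [key2]
  -- key iteration
  have key : ∀ n : ℕ, A s ≤
      Real.exp (∑ k ∈ Finset.range n, (2:ℝ) ^ k * (-Real.log (1 - (t / 2 ^ (k + 1)) ^ 2))) *
        A (s / 2 ^ n) ^ (2 ^ n) := by
    intro n
    induction n with
    | zero => simp
    | succ n ih =>
      have hu0 : (0:ℝ) ≤ s / 2 ^ (n + 1) := by positivity
      have hur : s / 2 ^ (n + 1) < r :=
        lt_of_le_of_lt (div_le_self hs.le (one_le_pow₀ (by norm_num))) hsr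
      have hstep := hrec (s / 2 ^ (n + 1)) hu0 hur
      have h2 : 2 * (s / 2 ^ (n + 1)) = s / 2 ^ n := by rw [pow_succ]; ring
      have harg : s / 2 ^ (n + 1) / r = t / 2 ^ (n + 1) := by
        rw [ht, div_div, div_div, mul_comm]
      rw [h2, harg] at hstep
      calc A s ≤
          Real.exp (∑ k ∈ Finset.range n, (2:ℝ) ^ k * (-Real.log (1 - (t / 2 ^ (k + 1)) ^ 2))) *
            A (s / 2 ^ n) ^ (2 ^ n) := ih
        _ ≤ Real.exp (∑ k ∈ Finset.range n, (2:ℝ) ^ k * (-Real.log (1 - (t / 2 ^ (k + 1)) ^ 2))) *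
            (A (s / 2 ^ (n + 1)) ^ 2 * Real.exp (-Real.log (1 - (t / 2 ^ (n + 1)) ^ 2))) ^ (2 ^ n) :=
            mul_le_mul_of_nonneg_left (pow_le_pow_left₀ (hApos _).le hstep _) (Real.exp_pos _).le
        _ = Real.exp (∑ k ∈ Finset.range (n + 1),
              (2:ℝ) ^ k * (-Real.log (1 - (t / 2 ^ (k + 1)) ^ 2))) *
            A (s / 2 ^ (n + 1)) ^ (2 ^ (n + 1)) := by
            rw [Finset.sum_range_succ, Real.exp_add, mul_pow, ← pow_mul, ← Real.exp_nat_mul]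
            have hexp : 2 * 2 ^ n = 2 ^ (n + 1) := by rw [pow_succ]; ring
            rw [hexp]
            push_cast
            ring
  -- limit argument
  have main : A s ≤ Real.exp (t * (∫ v in (0:ℝ)..t, HerbstAux.φ v) + s * m) := by
    set I := ∫ v in (0:ℝ)..t, HerbstAux.φ v with hI
    have h0 : Filter.Tendsto (fun n : ℕ => ((1:ℝ)/2) ^ n) Filter.atTop (nhds 0) :=
      tendsto_pow_atTop_nhds_zero_of_lt_one (by norm_num) (by norm_num)
    have htend : Filter.Tendsto
        (fun n : ℕ => Real.exp (t * I + s * m + s ^ 2 * C ^ 2 * (1/2) ^ n))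
        Filter.atTop (nhds (Real.exp (t * I + s * m))) := by
      have h1 : Filter.Tendsto (fun n : ℕ => t * I + s * m + s ^ 2 * C ^ 2 * (1/2) ^ n)
          Filter.atTop (nhds (t * I + s * m)) := by
        have := (h0.const_mul (s ^ 2 * C ^ 2)).const_add (t * I + s * m)
        simpa using this
      exact (Real.continuous_exp.tendsto _).comp h1
    apply ge_of_tendsto htend
    have hev : ∀ᶠ n : ℕ in Filter.atTop, s * C * (1/2) ^ n ≤ 1 := by
      have h1 : Filter.Tendsto (fun n : ℕ => s * C * ((1:ℝ)/2) ^ n) Filter.atTop (nhds 0) := by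
        simpa using h0.const_mul (s * C)
      exact h1.eventually (eventually_le_nhds one_pos)
    filter_upwards [hev] with n hn
    have huC : (s / 2 ^ n) * C ≤ 1 := by
      have he : s / 2 ^ n * C = s * C * (1/2) ^ n := by
        rw [div_pow, one_pow]
        ring
      rw [he]; exact hn
    have hsmall := HerbstAux.smallBound μ hf hb (u := s / 2 ^ n) (by positivity) huC
    have hpow : A (s / 2 ^ n) ^ (2 ^ n) ≤ Real.exp (s * m + s ^ 2 * C ^ 2 * (1/2) ^ n) := by
      calc A (s / 2 ^ n) ^ (2 ^ n)
          ≤ (Real.exp ((s / 2 ^ n) * m + (s / 2 ^ n) ^ 2 * C ^ 2)) ^ (2 ^ n) :=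
            pow_le_pow_left₀ (hApos _).le hsmall _
        _ = Real.exp (((2:ℕ) ^ n : ℕ) * ((s / 2 ^ n) * m + (s / 2 ^ n) ^ 2 * C ^ 2)) :=
            (Real.exp_nat_mul _ _).symm
        _ = Real.exp (s * m + s ^ 2 * C ^ 2 * (1/2) ^ n) := by
            congr 1
            push_cast
            field_simp
            have h2 : (2:ℝ) ^ n * (1 / 2) ^ n = 1 := by rw [← mul_pow]; norm_num
            linear_combination (-(s * C ^ 2)) * h2
    calc A s ≤
        Real.exp (∑ k ∈ Finset.range n, (2:ℝ) ^ k * (-Real.log (1 - (t / 2 ^ (k + 1)) ^ 2))) *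
          A (s / 2 ^ n) ^ (2 ^ n) := key n
      _ ≤ Real.exp (t * I) * Real.exp (s * m + s ^ 2 * C ^ 2 * (1/2) ^ n) :=
          mul_le_mul (Real.exp_le_exp.2 (HerbstAux.sum_le_integral ht0 ht1 n)) hpow
            (pow_nonneg (hApos _).le _) (Real.exp_pos _).le
      _ = Real.exp (t * I + s * m + s ^ 2 * C ^ 2 * (1/2) ^ n) := by
          rw [← Real.exp_add]; ring_nf
  -- conclude
  have lhs_eq : ∫ x, Real.exp (s * (f x - m)) ∂μ = A s * Real.exp (-(s * m)) := by
    simp only [hA]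
    rw [← integral_mul_const]
    congr 1
    funext x
    rw [← Real.exp_add]
    congr 1
    ring
  rw [lhs_eq]
  calc A s * Real.exp (-(s * m))
      ≤ Real.exp (t * (∫ v in (0:ℝ)..t, HerbstAux.φ v) + s * m) * Real.exp (-(s * m)) :=
        mul_le_mul_of_nonneg_right main (Real.exp_pos _).le
    _ = Real.exp (t * ∫ v in (0:ℝ)..t, HerbstAux.φ v) := by
        rw [← Real.exp_add]; ring_nf
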